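/- Suppose that for every ε > 0 and δ > 0 there exist two distinct pairs of words (u₁,v₁) ≠ (u₂,v₂) that are ε-relatively close δ-squares (in the sense of the given definitions for two fixed affine Cantor systems). Then for every ε > 0, δ > 0 and N ∈ ℕ there exist N distinct pairs of words that are pairwise ε-relatively close and each a δ-square. -/

import Mathlib

open Real Set

/-- Product of the contraction ratios (or orientations) along a finite word. -/
def wprod {n : ℕ} (f : Fin n → ℝ) (u : List (Fin n)) : ℝ := (u.map f).prod

/-- The infinite sequence obtained by appending the sequence `ω` to the word `u`. -/
def wcat {n : ℕ} (u : List (Fin n)) (ω : ℕ → Fin n) : ℕ → Fin n :=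
  fun k => if h : k < u.length then u.get ⟨k, h⟩ else ω (k - u.length)

/-- `(u,v)` is a `δ`-square: `λ_u/γ_v ∈ (e^{-δ}, e^{δ})`. -/
def IsSq {A B : ℕ} (lam : Fin A → ℝ) (gam : Fin B → ℝ) (δ : ℝ)
    (u : List (Fin A)) (v : List (Fin B)) : Prop :=
  wprod lam u / wprod gam v ∈ Set.Ioo (Real.exp (-δ)) (Real.exp δ)

/-- `(u₁,v₁)` and `(u₂,v₂)` are `ε`-relatively close (Definition 2.2), where
`L(ω,τ) = Π_λ(ω) + Π_γ(τ)` and `1̄` is realized as the constant sequence `0`. -/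
def RelClose {A B : ℕ} (lam Ol : Fin (A + 1) → ℝ) (gam Og : Fin (B + 1) → ℝ)
    (Pl : (ℕ → Fin (A + 1)) → ℝ) (Pg : (ℕ → Fin (B + 1)) → ℝ) (D ε : ℝ)
    (u1 : List (Fin (A + 1))) (v1 : List (Fin (B + 1)))
    (u2 : List (Fin (A + 1))) (v2 : List (Fin (B + 1))) : Prop :=
  wprod lam u1 / wprod lam u2 ∈ Set.Ioo (Real.exp (-ε)) (Real.exp ε) ∧
  wprod gam v1 / wprod gam v2 ∈ Set.Ioo (Real.exp (-ε)) (Real.exp ε) ∧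
  wprod Ol u1 = wprod Ol u2 ∧ wprod Og v1 = wprod Og v2 ∧
  |(Pl (wcat u1 fun _ => 0) + Pg (wcat v1 fun _ => 0)) -
      (Pl (wcat u2 fun _ => 0) + Pg (wcat v2 fun _ => 0))| <
    ε * D * min (min (wprod lam u1) (wprod lam u2)) (min (wprod gam v1) (wprod gam v2))

namespace Stmt16Aux

lemma wprod_nil {n : ℕ} (f : Fin n → ℝ) : wprod f [] = 1 := rfl

lemma wprod_cons {n : ℕ} (f : Fin n → ℝ) (i : Fin n) (x : List (Fin n)) :
    wprod f (i :: x) = f i * wprod f x := by simp [wprod]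

lemma wprod_append {n : ℕ} (f : Fin n → ℝ) (x y : List (Fin n)) :
    wprod f (x ++ y) = wprod f x * wprod f y := by simp [wprod]

lemma wprod_pos {n : ℕ} {f : Fin n → ℝ} (hf : ∀ i, f i ∈ Set.Ioo (0:ℝ) 1)
    (x : List (Fin n)) : 0 < wprod f x := by
  induction x with
  | nil => norm_num [wprod_nil]
  | cons i t ih => rw [wprod_cons]; exact mul_pos (hf i).1 ih

lemma wprod_le_one {n : ℕ} {f : Fin n → ℝ} (hf : ∀ i, f i ∈ Set.Ioo (0:ℝ) 1)
    (x : List (Fin n)) : wprod f x ≤ 1 := by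
  induction x with
  | nil => norm_num [wprod_nil]
  | cons i t ih =>
    rw [wprod_cons]
    nlinarith [(hf i).1, (hf i).2, wprod_pos hf t]

lemma wprod_le_max {n : ℕ} {f : Fin n → ℝ} (hf : ∀ i, f i ∈ Set.Ioo (0:ℝ) 1)
    {M : ℝ} (hM : ∀ i, f i ≤ M) {x : List (Fin n)} (hx : x ≠ []) :
    wprod f x ≤ M := by
  cases x with
  | nil => exact absurd rfl hx
  | cons i t =>
    rw [wprod_cons]
    have h1 := wprod_le_one hf t
    have h2 := wprod_pos hf t
    nlinarith [(hf i).1, hM i]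

lemma wprod_sign {n : ℕ} {f : Fin n → ℝ} (hf : ∀ i, f i = 1 ∨ f i = -1)
    (x : List (Fin n)) : wprod f x = 1 ∨ wprod f x = -1 := by
  induction x with
  | nil => left; rfl
  | cons i t ih => rw [wprod_cons]; rcases hf i with h | h <;> rcases ih with h' | h' <;>
      simp [h, h']

lemma abs_wprod_sign {n : ℕ} {f : Fin n → ℝ} (hf : ∀ i, f i = 1 ∨ f i = -1)
    (x : List (Fin n)) : |wprod f x| = 1 := by
  rcases wprod_sign hf x with h | h <;> simp [h]

lemma wcat_nil {n : ℕ} (ω : ℕ → Fin n) : wcat ([] : List (Fin n)) ω = ω := by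
  funext k; simp [wcat]

lemma wcat_cons_zero {n : ℕ} (i : Fin n) (x : List (Fin n)) (ω : ℕ → Fin n) :
    wcat (i :: x) ω 0 = i := by simp [wcat]

lemma wcat_cons_shift {n : ℕ} (i : Fin n) (x : List (Fin n)) (ω : ℕ → Fin n) :
    (fun k => wcat (i :: x) ω (k + 1)) = wcat x ω := by
  funext k
  simp only [wcat, List.length_cons]
  by_cases h : k < x.length
  · rw [dif_pos (by omega), dif_pos h]
    rfl
  · rw [dif_neg (by omega), dif_neg h]
    congr 1
    omega

def Kf {n : ℕ} (O l b : Fin n → ℝ) : List (Fin n) → ℝ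
  | [] => 0
  | i :: x => O i * l i * Kf O l b x + b i

lemma Kf_append {n : ℕ} (O l b : Fin n → ℝ) (x y : List (Fin n)) :
    Kf O l b (x ++ y) = Kf O l b x + wprod O x * wprod l x * Kf O l b y := by
  induction x with
  | nil => simp [Kf, wprod_nil]
  | cons i t ih =>
    simp only [List.cons_append, Kf, wprod_cons]
    rw [ih]
    ring

lemma P_wcat {n : ℕ} {O l b : Fin (n+1) → ℝ} {P : (ℕ → Fin (n+1)) → ℝ}
    (hP : ∀ ω, P ω = O (ω 0) * l (ω 0) * P (fun k => ω (k + 1)) + b (ω 0))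
    (x : List (Fin (n+1))) (ω : ℕ → Fin (n+1)) :
    P (wcat x ω) = wprod O x * wprod l x * P ω + Kf O l b x := by
  induction x with
  | nil => simp [wcat_nil, wprod_nil, Kf]
  | cons i t ih =>
    rw [hP (wcat (i :: t) ω), wcat_cons_zero, wcat_cons_shift, ih]
    simp only [wprod_cons, Kf]
    ring

lemma exp_sub_one_le {η : ℝ} (h0 : 0 ≤ η) (h : η ≤ 1/2) : exp η - 1 ≤ 2*η := by
  have h1 : -η + 1 ≤ exp (-η) := Real.add_one_le_exp (-η)
  have h2 : exp η * exp (-η) = 1 := by rw [← Real.exp_add]; simp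
  have h3 : (0:ℝ) < exp η := exp_pos η
  nlinarith [mul_le_mul_of_nonneg_left h1 h3.le]

lemma exp_mul_self_le_two {η : ℝ} (h0 : 0 ≤ η) (h : η ≤ 1/3) : exp η * exp η ≤ 2 := by
  rw [← Real.exp_add]
  have hl : η + η ≤ Real.log 2 := by have := Real.log_two_gt_d9; linarith
  calc exp (η + η) ≤ exp (Real.log 2) := exp_le_exp.mpr hl
    _ = 2 := Real.exp_log (by norm_num)

lemma ratio_lt {x y η : ℝ} (hy : 0 < y) (hr : x / y ∈ Set.Ioo (exp (-η)) (exp η)) :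
    x < exp η * y ∧ y < exp η * x := by
  obtain ⟨h1, h2⟩ := hr
  have h5 : exp η * exp (-η) = 1 := by rw [← Real.exp_add]; simp
  constructor
  · rw [div_lt_iff₀ hy] at h2; linarith
  · have h3 : exp (-η) * y < x := (lt_div_iff₀ hy).mp h1
    nlinarith [exp_pos η, mul_lt_mul_of_pos_left h3 (exp_pos η)]

lemma ratio_pos {x y η : ℝ} (hy : 0 < y) (hr : x / y ∈ Set.Ioo (exp (-η)) (exp η)) :
    0 < x := by
  have := (ratio_lt hy hr).2
  nlinarith [exp_pos η]

lemma abs_diff_le {x y η : ℝ} (hy : 0 < y) (hη : 0 ≤ η)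
    (hr : x / y ∈ Set.Ioo (exp (-η)) (exp η)) :
    |x - y| ≤ (exp η - 1) * min x y := by
  obtain ⟨u1, u2⟩ := ratio_lt hy hr
  have hx : 0 < x := ratio_pos hy hr
  have hexp1 : 1 ≤ exp η := by
    have := Real.add_one_le_exp η; linarith
  rcases le_total x y with h | h
  · rw [min_eq_left h, abs_of_nonpos (by linarith)]
    nlinarith
  · rw [min_eq_right h, abs_of_nonneg (by linarith)]
    nlinarith

lemma Ioo_exp_symm {x y η : ℝ} (hy : 0 < y)
    (hr : x / y ∈ Set.Ioo (exp (-η)) (exp η)) :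
    y / x ∈ Set.Ioo (exp (-η)) (exp η) := by
  obtain ⟨u1, u2⟩ := ratio_lt hy hr
  have hx : 0 < x := ratio_pos hy hr
  have h5 : exp η * exp (-η) = 1 := by rw [← Real.exp_add]; simp
  constructor
  · rw [lt_div_iff₀ hx]
    nlinarith [exp_pos η, exp_pos (-η)]
  · rw [div_lt_iff₀ hx]
    exact u2

lemma Ioo_exp_one {η : ℝ} (h : 0 < η) : (1:ℝ) ∈ Set.Ioo (exp (-η)) (exp η) := by
  constructor
  · calc exp (-η) < exp 0 := exp_lt_exp.mpr (by linarith)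
      _ = 1 := Real.exp_zero
  · calc (1:ℝ) = exp 0 := Real.exp_zero.symm
      _ < exp η := exp_lt_exp.mpr h

lemma Ioo_exp_mono {s t : ℝ} (h : s ≤ t) {x : ℝ}
    (hx : x ∈ Set.Ioo (exp (-s)) (exp s)) : x ∈ Set.Ioo (exp (-t)) (exp t) := by
  constructor
  · exact lt_of_le_of_lt (exp_le_exp.mpr (by linarith)) hx.1
  · exact lt_of_lt_of_le hx.2 (exp_le_exp.mpr h)

lemma Ioo_exp_mul {x y s t w : ℝ}
    (hx : x ∈ Set.Ioo (exp (-s)) (exp s)) (hy : y ∈ Set.Ioo (exp (-t)) (exp t))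
    (h : s + t ≤ w) : x * y ∈ Set.Ioo (exp (-w)) (exp w) := by
  have hx0 : 0 < x := lt_trans (exp_pos _) hx.1
  have hy0 : 0 < y := lt_trans (exp_pos _) hy.1
  constructor
  · calc exp (-w) ≤ exp (-(s+t)) := exp_le_exp.mpr (by linarith)
      _ = exp (-s) * exp (-t) := by rw [← Real.exp_add]; ring_nf
      _ < x * y := mul_lt_mul'' hx.1 hy.1 (exp_pos _).le (exp_pos _).le
  · calc x * y < exp s * exp t := mul_lt_mul'' hx.2 hy.2 hx0.le hy0.le
      _ = exp (s+t) := (Real.exp_add s t).symm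
      _ ≤ exp w := exp_le_exp.mpr h

lemma abs_diff_le_of_Icc {x y D : ℝ} (hx : x ∈ Set.Icc 0 D) (hy : y ∈ Set.Icc 0 D) :
    |x - y| ≤ D := by
  rw [abs_le]
  constructor <;> [linarith [hx.1, hy.2]; linarith [hx.2, hy.1]]

lemma append_cancel_of_ratio {n : ℕ} {f : Fin (n+1) → ℝ}
    (hf : ∀ i, f i ∈ Set.Ioo (0:ℝ) 1) {η : ℝ}
    (hM : ∀ i, f i ≤ exp (-η))
    {x x' u u' : List (Fin (n+1))}
    (hr : wprod f x / wprod f x' ∈ Set.Ioo (exp (-η)) (exp η))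
    (h : x ++ u = x' ++ u') : x = x' ∧ u = u' := by
  have hx := wprod_pos hf x
  have hx' := wprod_pos hf x'
  have h5 : exp η * exp (-η) = 1 := by rw [← Real.exp_add]; simp
  rcases List.append_eq_append_iff.mp h with ⟨w, hw1, hw2⟩ | ⟨w, hw1, hw2⟩
  · rcases eq_or_ne w [] with rfl | hwne
    · constructor
      · rw [hw1, List.append_nil]
      · rw [hw2, List.nil_append]
    · exfalso
      have hle : wprod f w ≤ exp (-η) := wprod_le_max hf hM hwne
      have hx'eq : wprod f x' = wprod f x * wprod f w := by rw [hw1, wprod_append]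
      have h2 : wprod f x < exp η * wprod f x' := (ratio_lt hx' hr).1
      nlinarith [exp_pos η, wprod_pos hf w]
  · rcases eq_or_ne w [] with rfl | hwne
    · constructor
      · rw [hw1, List.append_nil]
      · rw [hw2, List.nil_append]
    · exfalso
      have hle : wprod f w ≤ exp (-η) := wprod_le_max hf hM hwne
      have hxeq : wprod f x = wprod f x' * wprod f w := by rw [hw1, wprod_append]
      have h2 : wprod f x' < exp η * wprod f x := (ratio_lt hx' hr).2
      nlinarith [exp_pos η, wprod_pos hf w]

lemma cross_est (D ε Λ η s wa wa' wb wb' ka ka' kb kb' p1 p2 q1 q2 P0 Q0 wi wj xi xj : ℝ)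
    (hD : 0 < D) (hε : 0 < ε) (hΛ : 0 < Λ) (hη : 0 < η)
    (hη3 : η ≤ 1/3) (hηΛ : η ≤ ε * Λ / 26)
    (hs : |s| = 1)
    (hwa : 0 < wa) (hwa' : 0 < wa') (hwb : 0 < wb) (hwb' : 0 < wb')
    (hwi : Λ ≤ wi) (hwj : Λ ≤ wj) (hxi : Λ ≤ xi) (hxj : Λ ≤ xj)
    (hra : wa / wa' ∈ Set.Ioo (exp (-η)) (exp η))
    (hrb : wb / wb' ∈ Set.Ioo (exp (-η)) (exp η))
    (hsq : wa / wb ∈ Set.Ioo (exp (-η)) (exp η))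
    (hsq' : wa' / wb' ∈ Set.Ioo (exp (-η)) (exp η))
    (hP0 : P0 ∈ Set.Icc 0 D) (hQ0 : Q0 ∈ Set.Icc 0 D)
    (hp1 : p1 ∈ Set.Icc 0 D) (hp2 : p2 ∈ Set.Icc 0 D)
    (hq1 : q1 ∈ Set.Icc 0 D) (hq2 : q2 ∈ Set.Icc 0 D)
    (h0 : |(s*wa*P0 + ka + s*wb*Q0 + kb) - (s*wa'*P0 + ka' + s*wb'*Q0 + kb')| ≤
      η * D * min (min wa wa') (min wb wb'))
    (hF : |(p1 + q1) - (p2 + q2)| ≤ ε/8 * D * min (min wi wj) (min xi xj)) :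
    |(s*wa*p1 + ka + s*wb*q1 + kb) - (s*wa'*p2 + ka' + s*wb'*q2 + kb')| <
      ε * D * min (min (wa*wi) (wa'*wj)) (min (wb*xi) (wb'*xj)) := by
  set m0 := min (min wa wa') (min wb wb') with hm0
  set mF := min (min wi wj) (min xi xj) with hmF
  have hm0pos : 0 < m0 := lt_min (lt_min hwa hwa') (lt_min hwb hwb')
  have hmFΛ : Λ ≤ mF := le_min (le_min hwi hwj) (le_min hxi hxj)
  have hmFpos : 0 < mF := lt_of_lt_of_le hΛ hmFΛ
  obtain ⟨a1, a2⟩ := ratio_lt hwa' hra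
  obtain ⟨b1, b2⟩ := ratio_lt hwb' hrb
  obtain ⟨c1, c2⟩ := ratio_lt hwb hsq
  obtain ⟨d1, d2⟩ := ratio_lt hwb' hsq'
  have hexp1 : 1 ≤ exp η := by have := Real.add_one_le_exp η; linarith
  have hexp2 : exp η * exp η ≤ 2 := exp_mul_self_le_two hη.le hη3
  have hexple2 : exp η ≤ 2 := by nlinarith
  have hE : exp η - 1 ≤ 2*η := exp_sub_one_le hη.le (by linarith)
  have hE0 : 0 ≤ exp η - 1 := by linarith
  have e1 : m0 = wa ∨ m0 = wa' ∨ m0 = wb ∨ m0 = wb' := by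
    rw [hm0]
    rcases min_choice (min wa wa') (min wb wb') with h | h <;> rw [h]
    · rcases min_choice wa wa' with h' | h' <;> rw [h'] <;> tauto
    · rcases min_choice wb wb' with h' | h' <;> rw [h'] <;> tauto
  have step1 : ∀ x y : ℝ, 0 < y → x < exp η * y → x ≤ 2*y := by
    intro x y hy hxy
    have h1 : exp η * y ≤ 2 * y := mul_le_mul_of_nonneg_right hexple2 hy.le
    linarith only [hxy, h1, hy]
  have step2 : ∀ x y z : ℝ, 0 < z → x < exp η * y → y < exp η * z → x ≤ 2*z := by
    intro x y z hz hxy hyz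
    have h1 : exp η * y < exp η * (exp η * z) := mul_lt_mul_of_pos_left hyz (exp_pos η)
    have h2 := mul_le_mul_of_nonneg_right hexp2 hz.le
    nlinarith [h1, h2]
  have bwa : wa ≤ 2*m0 := by
    rcases e1 with h|h|h|h <;> rw [h]
    · linarith
    · exact step1 _ _ hwa' a1
    · exact step1 _ _ hwb c1
    · exact step2 _ _ _ hwb' a1 d1
  have bwa' : wa' ≤ 2*m0 := by
    rcases e1 with h|h|h|h <;> rw [h]
    · exact step1 _ _ hwa a2
    · linarith
    · exact step2 _ _ _ hwb a2 c1
    · exact step1 _ _ hwb' d1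
  have bwb : wb ≤ 2*m0 := by
    rcases e1 with h|h|h|h <;> rw [h]
    · exact step1 _ _ hwa c2
    · exact step2 _ _ _ hwa' c2 a1
    · linarith
    · exact step1 _ _ hwb' b1
  have bwb' : wb' ≤ 2*m0 := by
    rcases e1 with h|h|h|h <;> rw [h]
    · exact step2 _ _ _ hwa d2 a2
    · exact step1 _ _ hwa' d2
    · exact step1 _ _ hwb b2
    · linarith
  have hdaa' : |wa - wa'| ≤ (exp η - 1) * min wa wa' := abs_diff_le hwa' hη.le hra
  have hdbb' : |wb - wb'| ≤ (exp η - 1) * min wb wb' := abs_diff_le hwb' hη.le hrb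
  have hdab : |wa - wb| ≤ (exp η - 1) * min wa wb := abs_diff_le hwb hη.le hsq
  have hid : (s*wa*p1 + ka + s*wb*q1 + kb) - (s*wa'*p2 + ka' + s*wb'*q2 + kb') =
      s*(wa*((p1+q1)-(p2+q2))) + s*((wb-wa)*(q1-q2)) + s*((wa-wa')*(p2-P0))
      + s*((wb-wb')*(q2-Q0))
      + ((s*wa*P0 + ka + s*wb*Q0 + kb) - (s*wa'*P0 + ka' + s*wb'*Q0 + kb')) := by ring
  have A1 : |s*(wa*((p1+q1)-(p2+q2)))| = wa*|(p1+q1)-(p2+q2)| := by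
    rw [abs_mul, hs, one_mul, abs_mul, abs_of_pos hwa]
  have A2 : |s*((wb-wa)*(q1-q2))| = |wb-wa| * |q1-q2| := by
    rw [abs_mul, hs, one_mul, abs_mul]
  have A3 : |s*((wa-wa')*(p2-P0))| = |wa-wa'| * |p2-P0| := by
    rw [abs_mul, hs, one_mul, abs_mul]
  have A4 : |s*((wb-wb')*(q2-Q0))| = |wb-wb'| * |q2-Q0| := by
    rw [abs_mul, hs, one_mul, abs_mul]
  have habs : |(s*wa*p1 + ka + s*wb*q1 + kb) - (s*wa'*p2 + ka' + s*wb'*q2 + kb')| ≤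
      wa*|(p1+q1)-(p2+q2)| + |wb-wa| * |q1-q2| + |wa-wa'| * |p2-P0| + |wb-wb'| * |q2-Q0|
      + |(s*wa*P0 + ka + s*wb*Q0 + kb) - (s*wa'*P0 + ka' + s*wb'*Q0 + kb')| := by
    rw [hid]
    calc |s*(wa*((p1+q1)-(p2+q2))) + s*((wb-wa)*(q1-q2)) + s*((wa-wa')*(p2-P0))
        + s*((wb-wb')*(q2-Q0))
        + ((s*wa*P0 + ka + s*wb*Q0 + kb) - (s*wa'*P0 + ka' + s*wb'*Q0 + kb'))|
        ≤ |s*(wa*((p1+q1)-(p2+q2))) + s*((wb-wa)*(q1-q2)) + s*((wa-wa')*(p2-P0))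
        + s*((wb-wb')*(q2-Q0))|
        + |(s*wa*P0 + ka + s*wb*Q0 + kb) - (s*wa'*P0 + ka' + s*wb'*Q0 + kb')| :=
          abs_add_le _ _
      _ ≤ |s*(wa*((p1+q1)-(p2+q2))) + s*((wb-wa)*(q1-q2)) + s*((wa-wa')*(p2-P0))|
          + |s*((wb-wb')*(q2-Q0))|
          + |(s*wa*P0 + ka + s*wb*Q0 + kb) - (s*wa'*P0 + ka' + s*wb'*Q0 + kb')| := by
            gcongr; exact abs_add_le _ _
      _ ≤ |s*(wa*((p1+q1)-(p2+q2))) + s*((wb-wa)*(q1-q2))| + |s*((wa-wa')*(p2-P0))|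
          + |s*((wb-wb')*(q2-Q0))|
          + |(s*wa*P0 + ka + s*wb*Q0 + kb) - (s*wa'*P0 + ka' + s*wb'*Q0 + kb')| := by
            gcongr; exact abs_add_le _ _
      _ ≤ |s*(wa*((p1+q1)-(p2+q2)))| + |s*((wb-wa)*(q1-q2))| + |s*((wa-wa')*(p2-P0))|
          + |s*((wb-wb')*(q2-Q0))|
          + |(s*wa*P0 + ka + s*wb*Q0 + kb) - (s*wa'*P0 + ka' + s*wb'*Q0 + kb')| := by
            gcongr; exact abs_add_le _ _
      _ = wa*|(p1+q1)-(p2+q2)| + |wb-wa| * |q1-q2| + |wa-wa'| * |p2-P0|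
          + |wb-wb'| * |q2-Q0|
          + |(s*wa*P0 + ka + s*wb*Q0 + kb) - (s*wa'*P0 + ka' + s*wb'*Q0 + kb')| := by
            rw [A1, A2, A3, A4]
  have hq12 : |q1 - q2| ≤ D := abs_diff_le_of_Icc hq1 hq2
  have hp2P : |p2 - P0| ≤ D := abs_diff_le_of_Icc hp2 hP0
  have hq2Q : |q2 - Q0| ≤ D := abs_diff_le_of_Icc hq2 hQ0
  have B1 : wa*|(p1+q1)-(p2+q2)| ≤ 2*m0*(ε/8*D*mF) :=
    mul_le_mul bwa hF (abs_nonneg _) (by linarith)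
  have B2 : |wb-wa| * |q1-q2| ≤ (exp η - 1)*(2*m0)*D := by
    have h1 : |wb-wa| ≤ (exp η - 1)*(2*m0) := by
      rw [abs_sub_comm]
      calc |wa-wb| ≤ (exp η - 1) * min wa wb := hdab
        _ ≤ (exp η - 1)*(2*m0) := by
            have : min wa wb ≤ 2*m0 := le_trans (min_le_left _ _) bwa
            exact mul_le_mul_of_nonneg_left this hE0
    exact mul_le_mul h1 hq12 (abs_nonneg _) (by positivity)
  have B3 : |wa-wa'| * |p2-P0| ≤ (exp η - 1)*(2*m0)*D := by
    have h1 : |wa-wa'| ≤ (exp η - 1)*(2*m0) := by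
      calc |wa-wa'| ≤ (exp η - 1) * min wa wa' := hdaa'
        _ ≤ (exp η - 1)*(2*m0) := by
            have : min wa wa' ≤ 2*m0 := le_trans (min_le_left _ _) bwa
            exact mul_le_mul_of_nonneg_left this hE0
    exact mul_le_mul h1 hp2P (abs_nonneg _) (by positivity)
  have B4 : |wb-wb'| * |q2-Q0| ≤ (exp η - 1)*(2*m0)*D := by
    have h1 : |wb-wb'| ≤ (exp η - 1)*(2*m0) := by
      calc |wb-wb'| ≤ (exp η - 1) * min wb wb' := hdbb'
        _ ≤ (exp η - 1)*(2*m0) := by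
            have : min wb wb' ≤ 2*m0 := le_trans (min_le_left _ _) bwb
            exact mul_le_mul_of_nonneg_left this hE0
    exact mul_le_mul h1 hq2Q (abs_nonneg _) (by positivity)
  have hM : m0*mF ≤ min (min (wa*wi) (wa'*wj)) (min (wb*xi) (wb'*xj)) := by
    have l1 : m0 ≤ wa := le_trans (min_le_left _ _) (min_le_left _ _)
    have l2 : m0 ≤ wa' := le_trans (min_le_left _ _) (min_le_right _ _)
    have l3 : m0 ≤ wb := le_trans (min_le_right _ _) (min_le_left _ _)
    have l4 : m0 ≤ wb' := le_trans (min_le_right _ _) (min_le_right _ _)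
    have f1 : mF ≤ wi := le_trans (min_le_left _ _) (min_le_left _ _)
    have f2 : mF ≤ wj := le_trans (min_le_left _ _) (min_le_right _ _)
    have f3 : mF ≤ xi := le_trans (min_le_right _ _) (min_le_left _ _)
    have f4 : mF ≤ xj := le_trans (min_le_right _ _) (min_le_right _ _)
    exact le_min (le_min (mul_le_mul l1 f1 hmFpos.le hwa.le)
        (mul_le_mul l2 f2 hmFpos.le hwa'.le))
      (le_min (mul_le_mul l3 f3 hmFpos.le hwb.le) (mul_le_mul l4 f4 hmFpos.le hwb'.le))
  have total : |(s*wa*p1 + ka + s*wb*q1 + kb) - (s*wa'*p2 + ka' + s*wb'*q2 + kb')| ≤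
      2*m0*(ε/8*D*mF) + 3*((exp η - 1)*(2*m0)*D) + η*D*m0 := by
    linarith only [habs, B1, B2, B3, B4, h0]
  have final : 2*m0*(ε/8*D*mF) + 3*((exp η - 1)*(2*m0)*D) + η*D*m0 < ε*D*(m0*mF) := by
    have hu : (0:ℝ) < m0*D := mul_pos hm0pos hD
    have c1 := mul_le_mul_of_nonneg_right hE hu.le
    have c2 := mul_le_mul_of_nonneg_right hηΛ hu.le
    have c3 := mul_le_mul_of_nonneg_right hmFΛ (by positivity : (0:ℝ) ≤ ε/2*(m0*D))
    have c4 : (0:ℝ) < ε*D*(m0*mF) := by positivity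
    linarith only [c1, c2, c3, c4]
  calc |(s*wa*p1 + ka + s*wb*q1 + kb) - (s*wa'*p2 + ka' + s*wb'*q2 + kb')|
      ≤ 2*m0*(ε/8*D*mF) + 3*((exp η - 1)*(2*m0)*D) + η*D*m0 := total
    _ < ε*D*(m0*mF) := final
    _ ≤ ε * D * min (min (wa*wi) (wa'*wj)) (min (wb*xi) (wb'*xj)) := by
        apply mul_le_mul_of_nonneg_left hM (by positivity)

lemma suffix_est (D ε ε₁ δ s t wp wp' ww ww' kp kp' kw kw' pq qr P0 Q0 wq xr : ℝ)
    (hD : 0 < D) (hε : 0 < ε) (hδ : 0 < δ) (hδ1 : δ ≤ 1)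
    (hε₁ : 0 < ε₁) (hε₁m : ε₁ ≤ ε * min wq xr / 20) (hε₁h : ε₁ ≤ 1/2)
    (hs : |s| = 1) (ht : |t| = 1)
    (hwp : 0 < wp) (hwp' : 0 < wp') (hww : 0 < ww) (hww' : 0 < ww')
    (hwq : 0 < wq) (hxr : 0 < xr)
    (hra : wp / wp' ∈ Set.Ioo (exp (-ε₁)) (exp ε₁))
    (hsq : wp / ww ∈ Set.Ioo (exp (-(δ/2))) (exp (δ/2)))
    (hsq' : wp' / ww' ∈ Set.Ioo (exp (-(δ/2))) (exp (δ/2)))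
    (hrw : ww / ww' ∈ Set.Ioo (exp (-ε₁)) (exp ε₁))
    (hpq : pq ∈ Set.Icc 0 D) (hqr : qr ∈ Set.Icc 0 D)
    (hP0 : P0 ∈ Set.Icc 0 D) (hQ0 : Q0 ∈ Set.Icc 0 D)
    (h0 : |(s*wp*P0 + kp + t*ww*Q0 + kw) - (s*wp'*P0 + kp' + t*ww'*Q0 + kw')| ≤
      ε₁ * D * min (min wp wp') (min ww ww')) :
    |(s*wp*pq + kp + t*ww*qr + kw) - (s*wp'*pq + kp' + t*ww'*qr + kw')| <
      ε * D * min (min (wp*wq) (wp'*wq)) (min (ww*xr) (ww'*xr)) := by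
  set m0 := min (min wp wp') (min ww ww') with hm0
  have hm0pos : 0 < m0 := lt_min (lt_min hwp hwp') (lt_min hww hww')
  have hqx : 0 < min wq xr := lt_min hwq hxr
  obtain ⟨a1, a2⟩ := ratio_lt hwp' hra
  obtain ⟨b1, b2⟩ := ratio_lt hww' hrw
  obtain ⟨c1, c2⟩ := ratio_lt hww hsq
  obtain ⟨d1, d2⟩ := ratio_lt hww' hsq'
  have hexpe : exp ε₁ ≤ 2 := by
    have h1 : exp ε₁ ≤ exp (Real.log 2) := exp_le_exp.mpr
      (by have := Real.log_two_gt_d9; linarith)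
    rwa [Real.exp_log (by norm_num)] at h1
  have hexpd : exp (δ/2) ≤ 2 := by
    have h1 : exp (δ/2) ≤ exp (Real.log 2) := exp_le_exp.mpr
      (by have := Real.log_two_gt_d9; linarith)
    rwa [Real.exp_log (by norm_num)] at h1
  have hE : exp ε₁ - 1 ≤ 2*ε₁ := exp_sub_one_le hε₁.le hε₁h
  have hE0 : 0 ≤ exp ε₁ - 1 := by
    have := Real.add_one_le_exp ε₁; linarith
  have e1 : m0 = wp ∨ m0 = wp' ∨ m0 = ww ∨ m0 = ww' := by
    rw [hm0]
    rcases min_choice (min wp wp') (min ww ww') with h | h <;> rw [h]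
    · rcases min_choice wp wp' with h' | h' <;> rw [h'] <;> tauto
    · rcases min_choice ww ww' with h' | h' <;> rw [h'] <;> tauto
  have step1 : ∀ x y E : ℝ, 0 < y → E ≤ 2 → x < E * y → x ≤ 4*y := by
    intro x y E hy hEle hxy
    have h1 : E * y ≤ 2 * y := mul_le_mul_of_nonneg_right hEle hy.le
    linarith only [hxy, h1, hy]
  have step2 : ∀ x y z E F : ℝ, 0 < y → 0 < z → E ≤ 2 → F ≤ 2 →
      x < E * y → y < F * z → x ≤ 4*z := by
    intro x y z E F hy hz hEle hFle hxy hyz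
    have h1 : E * y ≤ 2 * y := mul_le_mul_of_nonneg_right hEle hy.le
    have h2 : F * z ≤ 2 * z := mul_le_mul_of_nonneg_right hFle hz.le
    linarith only [hxy, hyz, h1, h2, hz]
  have bwp : wp ≤ 4*m0 := by
    rcases e1 with h|h|h|h <;> rw [h]
    · linarith
    · exact step1 _ _ _ hwp' hexpe a1
    · exact step1 _ _ _ hww hexpd c1
    · exact step2 _ _ _ _ _ hwp' hww' hexpe hexpd a1 d1
  have bww : ww ≤ 4*m0 := by
    rcases e1 with h|h|h|h <;> rw [h]
    · exact step1 _ _ _ hwp hexpd c2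
    · exact step2 _ _ _ _ _ hwp hwp' hexpd hexpe c2 a1
    · linarith
    · exact step1 _ _ _ hww' hexpe b1
  have hdaa : |wp - wp'| ≤ (exp ε₁ - 1) * min wp wp' := abs_diff_le hwp' hε₁.le hra
  have hdbb : |ww - ww'| ≤ (exp ε₁ - 1) * min ww ww' := abs_diff_le hww' hε₁.le hrw
  have hid : (s*wp*pq + kp + t*ww*qr + kw) - (s*wp'*pq + kp' + t*ww'*qr + kw') =
      s*((wp-wp')*(pq-P0)) + t*((ww-ww')*(qr-Q0))
      + ((s*wp*P0 + kp + t*ww*Q0 + kw) - (s*wp'*P0 + kp' + t*ww'*Q0 + kw')) := by ring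
  have A1 : |s*((wp-wp')*(pq-P0))| = |wp-wp'| * |pq-P0| := by
    rw [abs_mul, hs, one_mul, abs_mul]
  have A2 : |t*((ww-ww')*(qr-Q0))| = |ww-ww'| * |qr-Q0| := by
    rw [abs_mul, ht, one_mul, abs_mul]
  have habs : |(s*wp*pq + kp + t*ww*qr + kw) - (s*wp'*pq + kp' + t*ww'*qr + kw')| ≤
      |wp-wp'| * |pq-P0| + |ww-ww'| * |qr-Q0|
      + |(s*wp*P0 + kp + t*ww*Q0 + kw) - (s*wp'*P0 + kp' + t*ww'*Q0 + kw')| := by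
    rw [hid]
    calc |s*((wp-wp')*(pq-P0)) + t*((ww-ww')*(qr-Q0))
        + ((s*wp*P0 + kp + t*ww*Q0 + kw) - (s*wp'*P0 + kp' + t*ww'*Q0 + kw'))|
        ≤ |s*((wp-wp')*(pq-P0)) + t*((ww-ww')*(qr-Q0))|
        + |(s*wp*P0 + kp + t*ww*Q0 + kw) - (s*wp'*P0 + kp' + t*ww'*Q0 + kw')| :=
          abs_add_le _ _
      _ ≤ |s*((wp-wp')*(pq-P0))| + |t*((ww-ww')*(qr-Q0))|
        + |(s*wp*P0 + kp + t*ww*Q0 + kw) - (s*wp'*P0 + kp' + t*ww'*Q0 + kw')| := by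
          gcongr; exact abs_add_le _ _
      _ = |wp-wp'| * |pq-P0| + |ww-ww'| * |qr-Q0|
        + |(s*wp*P0 + kp + t*ww*Q0 + kw) - (s*wp'*P0 + kp' + t*ww'*Q0 + kw')| := by
          rw [A1, A2]
  have hpqP : |pq - P0| ≤ D := abs_diff_le_of_Icc hpq hP0
  have hqrQ : |qr - Q0| ≤ D := abs_diff_le_of_Icc hqr hQ0
  have B1 : |wp-wp'| * |pq-P0| ≤ (exp ε₁ - 1)*(4*m0)*D := by
    have h1 : |wp-wp'| ≤ (exp ε₁ - 1)*(4*m0) := by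
      calc |wp-wp'| ≤ (exp ε₁ - 1) * min wp wp' := hdaa
        _ ≤ (exp ε₁ - 1)*(4*m0) :=
            mul_le_mul_of_nonneg_left (le_trans (min_le_left _ _) bwp) hE0
    exact mul_le_mul h1 hpqP (abs_nonneg _) (by positivity)
  have B2 : |ww-ww'| * |qr-Q0| ≤ (exp ε₁ - 1)*(4*m0)*D := by
    have h1 : |ww-ww'| ≤ (exp ε₁ - 1)*(4*m0) := by
      calc |ww-ww'| ≤ (exp ε₁ - 1) * min ww ww' := hdbb
        _ ≤ (exp ε₁ - 1)*(4*m0) :=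
            mul_le_mul_of_nonneg_left (le_trans (min_le_left _ _) bww) hE0
    exact mul_le_mul h1 hqrQ (abs_nonneg _) (by positivity)
  have hM : m0 * min wq xr ≤ min (min (wp*wq) (wp'*wq)) (min (ww*xr) (ww'*xr)) := by
    have l1 : m0 ≤ wp := le_trans (min_le_left _ _) (min_le_left _ _)
    have l2 : m0 ≤ wp' := le_trans (min_le_left _ _) (min_le_right _ _)
    have l3 : m0 ≤ ww := le_trans (min_le_right _ _) (min_le_left _ _)
    have l4 : m0 ≤ ww' := le_trans (min_le_right _ _) (min_le_right _ _)
    exact le_min (le_min (mul_le_mul l1 (min_le_left _ _) hqx.le hwp.le)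
        (mul_le_mul l2 (min_le_left _ _) hqx.le hwp'.le))
      (le_min (mul_le_mul l3 (min_le_right _ _) hqx.le hww.le)
        (mul_le_mul l4 (min_le_right _ _) hqx.le hww'.le))
  have total : |(s*wp*pq + kp + t*ww*qr + kw) - (s*wp'*pq + kp' + t*ww'*qr + kw')| ≤
      2*((exp ε₁ - 1)*(4*m0)*D) + ε₁*D*m0 := by
    linarith only [habs, B1, B2, h0]
  have final : 2*((exp ε₁ - 1)*(4*m0)*D) + ε₁*D*m0 < ε*D*(m0 * min wq xr) := by
    have hu : (0:ℝ) < m0*D := mul_pos hm0pos hD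
    have c1 := mul_le_mul_of_nonneg_right hE hu.le
    have c2 := mul_le_mul_of_nonneg_right hε₁m hu.le
    have c4 : (0:ℝ) < ε*D*(m0*min wq xr) := by positivity
    linarith only [c1, c2, c4]
  calc |(s*wp*pq + kp + t*ww*qr + kw) - (s*wp'*pq + kp' + t*ww'*qr + kw')|
      ≤ 2*((exp ε₁ - 1)*(4*m0)*D) + ε₁*D*m0 := total
    _ < ε*D*(m0 * min wq xr) := final
    _ ≤ ε * D * min (min (wp*wq) (wp'*wq)) (min (ww*xr) (ww'*xr)) :=
        mul_le_mul_of_nonneg_left hM (by positivity)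

lemma IsSq_mono {A B : ℕ} {lam : Fin A → ℝ} {gam : Fin B → ℝ} {δ' δ : ℝ}
    (hd : δ' ≤ δ) {u : List (Fin A)} {v : List (Fin B)}
    (h : IsSq lam gam δ' u v) : IsSq lam gam δ u v := Ioo_exp_mono hd h

lemma RelClose_mono {A B : ℕ} {lam Ol : Fin (A + 1) → ℝ} {gam Og : Fin (B + 1) → ℝ}
    {Pl : (ℕ → Fin (A + 1)) → ℝ} {Pg : (ℕ → Fin (B + 1)) → ℝ} {D ε' ε : ℝ}
    (hlam : ∀ i, lam i ∈ Set.Ioo (0:ℝ) 1) (hgam : ∀ j, gam j ∈ Set.Ioo (0:ℝ) 1)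
    (hD : 0 < D) (he : ε' ≤ ε)
    {u1 u2 : List (Fin (A + 1))} {v1 v2 : List (Fin (B + 1))}
    (h : RelClose lam Ol gam Og Pl Pg D ε' u1 v1 u2 v2) :
    RelClose lam Ol gam Og Pl Pg D ε u1 v1 u2 v2 := by
  obtain ⟨h1, h2, h3, h4, h5⟩ := h
  have hm : 0 < min (min (wprod lam u1) (wprod lam u2))
      (min (wprod gam v1) (wprod gam v2)) :=
    lt_min (lt_min (wprod_pos hlam _) (wprod_pos hlam _))
      (lt_min (wprod_pos hgam _) (wprod_pos hgam _))
  refine ⟨Ioo_exp_mono he h1, Ioo_exp_mono he h2, h3, h4, lt_of_lt_of_le h5 ?_⟩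
  exact mul_le_mul_of_nonneg_right (mul_le_mul_of_nonneg_right he hD.le) hm.le

lemma sign_neg_of_ne {x y : ℝ} (hx : x = 1 ∨ x = -1) (hy : y = 1 ∨ y = -1)
    (h : x ≠ y) : x = -y := by
  rcases hx with rfl | rfl <;> rcases hy with rfl | rfl
  · exact absurd rfl h
  · norm_num
  · norm_num
  · exact absurd rfl h

end Stmt16Aux
open Stmt16Aux

theorem stmt16 (A B : ℕ)
    (lam Ol bl : Fin (A + 1) → ℝ) (gam Og bg : Fin (B + 1) → ℝ)
    (hlam : ∀ i, lam i ∈ Set.Ioo (0:ℝ) 1) (hgam : ∀ j, gam j ∈ Set.Ioo (0:ℝ) 1)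
    (hOl : ∀ i, Ol i = 1 ∨ Ol i = -1) (hOg : ∀ j, Og j = 1 ∨ Og j = -1)
    (Pl : (ℕ → Fin (A + 1)) → ℝ) (Pg : (ℕ → Fin (B + 1)) → ℝ)
    (hPl : ∀ ω, Pl ω = Ol (ω 0) * lam (ω 0) * Pl (fun n => ω (n + 1)) + bl (ω 0))
    (hPg : ∀ τ, Pg τ = Og (τ 0) * gam (τ 0) * Pg (fun n => τ (n + 1)) + bg (τ 0))
    (D : ℝ) (hD : 0 < D)
    (hrl : ∀ ω, Pl ω ∈ Set.Icc 0 D) (hrg : ∀ τ, Pg τ ∈ Set.Icc 0 D)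
    (hyp : ∀ ε > (0:ℝ), ∀ δ > (0:ℝ),
      ∃ (u1 u2 : List (Fin (A + 1))) (v1 v2 : List (Fin (B + 1))),
        (u1, v1) ≠ (u2, v2) ∧ IsSq lam gam δ u1 v1 ∧ IsSq lam gam δ u2 v2 ∧
        RelClose lam Ol gam Og Pl Pg D ε u1 v1 u2 v2) :
    ∀ ε > (0:ℝ), ∀ δ > (0:ℝ), ∀ N : ℕ,
      ∃ p : Fin N → List (Fin (A + 1)) × List (Fin (B + 1)),
        Function.Injective p ∧
        (∀ i, IsSq lam gam δ (p i).1 (p i).2) ∧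
        (∀ i j, i ≠ j →
          RelClose lam Ol gam Og Pl Pg D ε (p i).1 (p i).2 (p j).1 (p j).2) := by
  classical
  -- ===================== Step A: matched-orientation close square pairs ==========
  have stepA : ∀ ε' > (0:ℝ), ∀ δ' > (0:ℝ), δ' ≤ 1 →
      ∃ (a a' : List (Fin (A+1))) (b b' : List (Fin (B+1))),
        (a, b) ≠ (a', b') ∧ IsSq lam gam δ' a b ∧ IsSq lam gam δ' a' b' ∧
        RelClose lam Ol gam Og Pl Pg D ε' a b a' b' ∧
        wprod Ol a = wprod Og b ∧ wprod Ol a' = wprod Og b' := by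
    intro ε hε δ hδ hδ1
    obtain ⟨q, q', r, r', hneQ, hsq1, hsq2, hclQ⟩ :=
      hyp (min (ε/2) (1/2)) (by positivity) (δ/2) (by positivity)
    by_cases hmq : wprod Ol q = wprod Og r
    · refine ⟨q, q', r, r', hneQ, IsSq_mono (by linarith) hsq1,
        IsSq_mono (by linarith) hsq2,
        RelClose_mono hlam hgam hD (le_trans (min_le_left _ _) (by linarith)) hclQ,
        hmq, ?_⟩
      rw [← hclQ.2.2.1, ← hclQ.2.2.2.1]; exact hmq
    · have hmqpos : 0 < min (wprod lam q) (wprod gam r) :=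
        lt_min (wprod_pos hlam q) (wprod_pos hgam r)
      set ε₁ := min (min (ε/2) (1/2)) (ε * min (wprod lam q) (wprod gam r) / 20)
        with hε₁def
      have hε₁pos : 0 < ε₁ :=
        lt_min (lt_min (by positivity) (by norm_num)) (by positivity)
      have hε₁ε : ε₁ ≤ ε := by
        calc ε₁ ≤ min (ε/2) (1/2) := min_le_left _ _
          _ ≤ ε/2 := min_le_left _ _
          _ ≤ ε := by linarith
      obtain ⟨p, p', w, w', hneP, hsp1, hsp2, hclP⟩ :=
        hyp ε₁ hε₁pos (δ/2) (by positivity)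
      by_cases hmp : wprod Ol p = wprod Og w
      · refine ⟨p, p', w, w', hneP, IsSq_mono (by linarith) hsp1,
          IsSq_mono (by linarith) hsp2,
          RelClose_mono hlam hgam hD hε₁ε hclP, hmp, ?_⟩
        rw [← hclP.2.2.1, ← hclP.2.2.2.1]; exact hmp
      · obtain ⟨hclP1, hclP2, hclP3, hclP4, hclP5⟩ := hclP
        have hpw : wprod Ol p = -wprod Og w :=
          sign_neg_of_ne (wprod_sign hOl p) (wprod_sign hOg w) hmp
        have hqr : wprod Ol q = -wprod Og r :=
          sign_neg_of_ne (wprod_sign hOl q) (wprod_sign hOg r) hmq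
        refine ⟨p ++ q, p' ++ q, w ++ r, w' ++ r, ?_, ?_, ?_, ?_, ?_, ?_⟩
        · intro hcontra
          have h1 : p ++ q = p' ++ q := congrArg Prod.fst hcontra
          have h2 : w ++ r = w' ++ r := congrArg Prod.snd hcontra
          exact hneP (by
            rw [List.append_cancel_right h1, List.append_cancel_right h2])
        · unfold IsSq
          rw [wprod_append, wprod_append, mul_div_mul_comm]
          exact Ioo_exp_mul hsp1 hsq1 (by linarith)
        · unfold IsSq
          rw [wprod_append, wprod_append, mul_div_mul_comm]
          exact Ioo_exp_mul hsp2 hsq1 (by linarith)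
        · refine ⟨?_, ?_, ?_, ?_, ?_⟩
          · rw [wprod_append, wprod_append,
              mul_div_mul_right _ _ (ne_of_gt (wprod_pos hlam q))]
            exact Ioo_exp_mono hε₁ε hclP1
          · rw [wprod_append, wprod_append,
              mul_div_mul_right _ _ (ne_of_gt (wprod_pos hgam r))]
            exact Ioo_exp_mono hε₁ε hclP2
          · rw [wprod_append, wprod_append, hclP3]
          · rw [wprod_append, wprod_append, hclP4]
          · have key := suffix_est D ε ε₁ δ (wprod Ol p) (wprod Og w)
              (wprod lam p) (wprod lam p') (wprod gam w) (wprod gam w')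
              (Kf Ol lam bl p) (Kf Ol lam bl p') (Kf Og gam bg w) (Kf Og gam bg w')
              (Pl (wcat q fun _ => 0)) (Pg (wcat r fun _ => 0))
              (Pl fun _ => 0) (Pg fun _ => 0)
              (wprod lam q) (wprod gam r)
              hD hε hδ hδ1 hε₁pos (min_le_right _ _)
              (le_trans (min_le_left _ _) (min_le_right _ _))
              (abs_wprod_sign hOl p) (abs_wprod_sign hOg w)
              (wprod_pos hlam p) (wprod_pos hlam p') (wprod_pos hgam w)
              (wprod_pos hgam w') (wprod_pos hlam q) (wprod_pos hgam r)
              hclP1 hsp1 hsp2 hclP2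
              (hrl _) (hrg _) (hrl _) (hrg _)
              (by
                have h := le_of_lt hclP5
                rw [P_wcat hPl p, P_wcat hPl p', P_wcat hPg w, P_wcat hPg w',
                  ← hclP3, ← hclP4] at h
                convert h using 2
                rfl
                ring)
            have el1 : Pl (wcat (p ++ q) fun _ => 0) =
                wprod Ol p * wprod lam p * (Pl (wcat q fun _ => 0))
                  + Kf Ol lam bl p := by
              rw [P_wcat hPl (p ++ q), P_wcat hPl q, wprod_append, wprod_append,
                Kf_append]
              ring
            have el2 : Pl (wcat (p' ++ q) fun _ => 0) =
                wprod Ol p * wprod lam p' * (Pl (wcat q fun _ => 0))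
                  + Kf Ol lam bl p' := by
              rw [P_wcat hPl (p' ++ q), P_wcat hPl q, wprod_append, wprod_append,
                Kf_append, ← hclP3]
              ring
            have eg1 : Pg (wcat (w ++ r) fun _ => 0) =
                wprod Og w * wprod gam w * (Pg (wcat r fun _ => 0))
                  + Kf Og gam bg w := by
              rw [P_wcat hPg (w ++ r), P_wcat hPg r, wprod_append, wprod_append,
                Kf_append]
              ring
            have eg2 : Pg (wcat (w' ++ r) fun _ => 0) =
                wprod Og w * wprod gam w' * (Pg (wcat r fun _ => 0))
                  + Kf Og gam bg w' := by
              rw [P_wcat hPg (w' ++ r), P_wcat hPg r, wprod_append, wprod_append,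
                Kf_append, ← hclP4]
              ring
            rw [el1, el2, eg1, eg2, wprod_append, wprod_append, wprod_append,
              wprod_append]
            convert key using 2
            ring
        · rw [wprod_append, wprod_append, hpw, hqr]; ring
        · rw [wprod_append, wprod_append, ← hclP3, ← hclP4, hpw, hqr]; ring
  -- ===================== Main induction ==========================================
  have main : ∀ n : ℕ, ∀ ε > (0:ℝ), ∀ δ > (0:ℝ),
      ∃ p : Fin (2^n) → List (Fin (A + 1)) × List (Fin (B + 1)),
        Function.Injective p ∧
        (∀ i, IsSq lam gam δ (p i).1 (p i).2) ∧
        (∀ i j, i ≠ j →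
          RelClose lam Ol gam Og Pl Pg D ε (p i).1 (p i).2 (p j).1 (p j).2) := by
    intro n
    induction n with
    | zero =>
      intro ε hε δ hδ
      have hsing : ∀ i j : Fin (2^0), i = j := by
        have : Subsingleton (Fin (2^0)) := by rw [pow_zero]; infer_instance
        exact fun i j => Subsingleton.elim i j
      refine ⟨fun _ => ([], []), fun i j _ => hsing i j, ?_, ?_⟩
      · intro i
        show wprod lam [] / wprod gam [] ∈ _
        rw [wprod_nil, wprod_nil, div_one]
        exact Ioo_exp_one hδ
      · intro i j hij
        exact absurd (hsing i j) hij
    | succ n IH =>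
      intro ε hε δ hδ
      obtain ⟨p, hinj, hsq, hcl⟩ := IH (ε/8) (by positivity) (δ/2) (by positivity)
      haveI : Nonempty (Fin (2^n)) := ⟨⟨0, Nat.two_pow_pos n⟩⟩
      set Λ := (Finset.univ : Finset (Fin (2^n))).inf' Finset.univ_nonempty
        (fun i => min (wprod lam (p i).1) (wprod gam (p i).2)) with hΛdef
      have hΛpos : 0 < Λ := by
        rw [hΛdef]
        rw [Finset.lt_inf'_iff]
        exact fun i _ => lt_min (wprod_pos hlam _) (wprod_pos hgam _)
      have hΛle1 : ∀ i, Λ ≤ wprod lam (p i).1 := fun i =>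
        le_trans (Finset.inf'_le _ (Finset.mem_univ i)) (min_le_left _ _)
      have hΛle2 : ∀ i, Λ ≤ wprod gam (p i).2 := fun i =>
        le_trans (Finset.inf'_le _ (Finset.mem_univ i)) (min_le_right _ _)
      have hΛ1 : Λ ≤ 1 := by
        obtain ⟨i0⟩ := (inferInstance : Nonempty (Fin (2^n)))
        exact le_trans (hΛle1 i0) (wprod_le_one hlam _)
      obtain ⟨im, him⟩ := Finite.exists_max lam
      obtain ⟨jm, hjm⟩ := Finite.exists_max gam
      set η := min (min (1/3) (ε*Λ/26))
        (min (δ/2) (min (-Real.log (lam im)) (-Real.log (gam jm)))) with hηdef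
      have hηpos : 0 < η := by
        refine lt_min (lt_min (by norm_num) (by positivity)) (lt_min (by positivity)
          (lt_min ?_ ?_))
        · exact neg_pos.mpr (Real.log_neg (hlam im).1 (hlam im).2)
        · exact neg_pos.mpr (Real.log_neg (hgam jm).1 (hgam jm).2)
      have hη13 : η ≤ 1/3 := le_trans (min_le_left _ _) (min_le_left _ _)
      have hηΛ : η ≤ ε*Λ/26 := le_trans (min_le_left _ _) (min_le_right _ _)
      have hηδ : η ≤ δ/2 := le_trans (min_le_right _ _) (min_le_left _ _)
      have hηL : η ≤ -Real.log (lam im) :=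
        le_trans (min_le_right _ _) (le_trans (min_le_right _ _) (min_le_left _ _))
      have hηG : η ≤ -Real.log (gam jm) :=
        le_trans (min_le_right _ _) (le_trans (min_le_right _ _) (min_le_right _ _))
      have hη1 : η ≤ 1 := le_trans hη13 (by norm_num)
      obtain ⟨a, a', b, b', hneA, hsqA, hsqA', hclA, hmA, hmA'⟩ :=
        stepA η hηpos η hηpos hη1
      obtain ⟨hclA1, hclA2, hclA3, hclA4, hclA5⟩ := hclA
      have hLmax : ∀ i : Fin (A+1), lam i ≤ exp (-η) := by
        intro i
        have h1 : Real.log (lam im) ≤ -η := by linarith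
        calc lam i ≤ lam im := him i
          _ = exp (Real.log (lam im)) := (Real.exp_log (hlam im).1).symm
          _ ≤ exp (-η) := exp_le_exp.mpr h1
      have hGmax : ∀ j : Fin (B+1), gam j ≤ exp (-η) := by
        intro j
        have h1 : Real.log (gam jm) ≤ -η := by linarith
        calc gam j ≤ gam jm := hjm j
          _ = exp (Real.log (gam jm)) := (Real.exp_log (hgam jm).1).symm
          _ ≤ exp (-η) := exp_le_exp.mpr h1
      have fin2 : ∀ s : Fin 2, s = 0 ∨ s = 1 := by decide
      set Aw : Fin 2 → List (Fin (A+1)) := fun s => if s = 0 then a else a'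
        with hAwdef
      set Bw : Fin 2 → List (Fin (B+1)) := fun s => if s = 0 then b else b'
        with hBwdef
      have hAw0 : Aw 0 = a := by rw [hAwdef]; simp
      have hAw1 : Aw 1 = a' := by rw [hAwdef]; simp
      have hBw0 : Bw 0 = b := by rw [hBwdef]; simp
      have hBw1 : Bw 1 = b' := by rw [hBwdef]; simp
      -- uniform facts about the prefix pair
      have hsqAw : ∀ s, wprod lam (Aw s) / wprod gam (Bw s) ∈
          Set.Ioo (exp (-η)) (exp η) := by
        intro s
        rcases fin2 s with rfl | rfl
        · rw [hAw0, hBw0]; exact hsqA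
        · rw [hAw1, hBw1]; exact hsqA'
      have hrAw : ∀ s t, wprod lam (Aw s) / wprod lam (Aw t) ∈
          Set.Ioo (exp (-η)) (exp η) := by
        intro s t
        rcases fin2 s with rfl | rfl <;> rcases fin2 t with rfl | rfl
        · rw [hAw0, div_self (ne_of_gt (wprod_pos hlam a))]; exact Ioo_exp_one hηpos
        · rw [hAw0, hAw1]; exact hclA1
        · rw [hAw1, hAw0]; exact Ioo_exp_symm (wprod_pos hlam a') hclA1
        · rw [hAw1, div_self (ne_of_gt (wprod_pos hlam a'))]; exact Ioo_exp_one hηpos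
      have hrBw : ∀ s t, wprod gam (Bw s) / wprod gam (Bw t) ∈
          Set.Ioo (exp (-η)) (exp η) := by
        intro s t
        rcases fin2 s with rfl | rfl <;> rcases fin2 t with rfl | rfl
        · rw [hBw0, div_self (ne_of_gt (wprod_pos hgam b))]; exact Ioo_exp_one hηpos
        · rw [hBw0, hBw1]; exact hclA2
        · rw [hBw1, hBw0]; exact Ioo_exp_symm (wprod_pos hgam b') hclA2
        · rw [hBw1, div_self (ne_of_gt (wprod_pos hgam b'))]; exact Ioo_exp_one hηpos
      have hsgnA : ∀ s, wprod Ol (Aw s) = wprod Ol a := by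
        intro s
        rcases fin2 s with rfl | rfl
        · rw [hAw0]
        · rw [hAw1, ← hclA3]
      have hsgnB : ∀ s, wprod Og (Bw s) = wprod Ol a := by
        intro s
        rcases fin2 s with rfl | rfl
        · rw [hBw0, ← hmA]
        · rw [hBw1, ← hmA', ← hclA3]
      have h0st : ∀ s t, |(Pl (wcat (Aw s) fun _ => 0) + Pg (wcat (Bw s) fun _ => 0))
          - (Pl (wcat (Aw t) fun _ => 0) + Pg (wcat (Bw t) fun _ => 0))| ≤
          η * D * min (min (wprod lam (Aw s)) (wprod lam (Aw t)))
            (min (wprod gam (Bw s)) (wprod gam (Bw t))) := by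
        intro s t
        have hnn : ∀ s t : Fin 2, (0:ℝ) ≤ η * D *
            min (min (wprod lam (Aw s)) (wprod lam (Aw t)))
              (min (wprod gam (Bw s)) (wprod gam (Bw t))) := by
          intro s t
          exact mul_nonneg (mul_nonneg hηpos.le hD.le)
            (le_min (le_min (wprod_pos hlam _).le (wprod_pos hlam _).le)
              (le_min (wprod_pos hgam _).le (wprod_pos hgam _).le))
        rcases fin2 s with rfl | rfl <;> rcases fin2 t with rfl | rfl
        · rw [sub_self, abs_zero]
          exact hnn 0 0
        · rw [hAw0, hAw1, hBw0, hBw1]; exact le_of_lt hclA5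
        · rw [hAw0, hAw1, hBw0, hBw1, abs_sub_comm,
            min_comm (wprod lam a') (wprod lam a),
            min_comm (wprod gam b') (wprod gam b)]
          exact le_of_lt hclA5
        · rw [sub_self, abs_zero]
          exact hnn 1 1
      -- family uniform facts
      have hFr1 : ∀ i j, wprod lam (p i).1 / wprod lam (p j).1 ∈
          Set.Ioo (exp (-(ε/8))) (exp (ε/8)) := by
        intro i j
        rcases eq_or_ne i j with rfl | hij
        · rw [div_self (ne_of_gt (wprod_pos hlam _))]
          exact Ioo_exp_one (by positivity)
        · exact (hcl i j hij).1
      have hFr2 : ∀ i j, wprod gam (p i).2 / wprod gam (p j).2 ∈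
          Set.Ioo (exp (-(ε/8))) (exp (ε/8)) := by
        intro i j
        rcases eq_or_ne i j with rfl | hij
        · rw [div_self (ne_of_gt (wprod_pos hgam _))]
          exact Ioo_exp_one (by positivity)
        · exact (hcl i j hij).2.1
      have hFs1 : ∀ i j, wprod Ol (p i).1 = wprod Ol (p j).1 := by
        intro i j
        rcases eq_or_ne i j with rfl | hij
        · rfl
        · exact (hcl i j hij).2.2.1
      have hFs2 : ∀ i j, wprod Og (p i).2 = wprod Og (p j).2 := by
        intro i j
        rcases eq_or_ne i j with rfl | hij
        · rfl
        · exact (hcl i j hij).2.2.2.1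
      have hFL : ∀ i j, |(Pl (wcat (p i).1 fun _ => 0) + Pg (wcat (p i).2 fun _ => 0))
          - (Pl (wcat (p j).1 fun _ => 0) + Pg (wcat (p j).2 fun _ => 0))| ≤
          ε/8 * D * min (min (wprod lam (p i).1) (wprod lam (p j).1))
            (min (wprod gam (p i).2) (wprod gam (p j).2)) := by
        intro i j
        rcases eq_or_ne i j with rfl | hij
        · rw [sub_self, abs_zero]
          exact mul_nonneg (mul_nonneg (by linarith) hD.le)
            (le_min (le_min (wprod_pos hlam _).le (wprod_pos hlam _).le)
              (le_min (wprod_pos hgam _).le (wprod_pos hgam _).le))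
        · exact le_of_lt (hcl i j hij).2.2.2.2
      -- the doubled family
      have hpow : 2^(n+1) = 2 * 2^n := by rw [pow_succ, Nat.mul_comm]
      let e : Fin (2^(n+1)) ≃ Fin 2 × Fin (2^n) :=
        (finCongr hpow).trans finProdFinEquiv.symm
      set q : Fin 2 × Fin (2^n) → List (Fin (A + 1)) × List (Fin (B + 1)) :=
        fun si => (Aw si.1 ++ (p si.2).1, Bw si.1 ++ (p si.2).2) with hqdef
      -- key rewriting lemmas
      have hLcat : ∀ (s : Fin 2) (x : List (Fin (A+1))),
          Pl (wcat (Aw s ++ x) fun _ => 0) =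
          wprod Ol a * wprod lam (Aw s) * (Pl (wcat x fun _ => 0))
            + Kf Ol lam bl (Aw s) := by
        intro s x
        rw [P_wcat hPl (Aw s ++ x), P_wcat hPl x, wprod_append, wprod_append,
          Kf_append, hsgnA s]
        ring
      have hGcat : ∀ (s : Fin 2) (x : List (Fin (B+1))),
          Pg (wcat (Bw s ++ x) fun _ => 0) =
          wprod Ol a * wprod gam (Bw s) * (Pg (wcat x fun _ => 0))
            + Kf Og gam bg (Bw s) := by
        intro s x
        rw [P_wcat hPg (Bw s ++ x), P_wcat hPg x, wprod_append, wprod_append,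
          Kf_append, hsgnB s]
        ring
      have h0st' : ∀ s t, |(wprod Ol a * wprod lam (Aw s) * Pl (fun _ => 0)
            + Kf Ol lam bl (Aw s)
            + wprod Ol a * wprod gam (Bw s) * Pg (fun _ => 0) + Kf Og gam bg (Bw s))
          - (wprod Ol a * wprod lam (Aw t) * Pl (fun _ => 0) + Kf Ol lam bl (Aw t)
            + wprod Ol a * wprod gam (Bw t) * Pg (fun _ => 0)
            + Kf Og gam bg (Bw t))| ≤
          η * D * min (min (wprod lam (Aw s)) (wprod lam (Aw t)))
            (min (wprod gam (Bw s)) (wprod gam (Bw t))) := by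
        intro s t
        have h := h0st s t
        rw [P_wcat hPl (Aw s), P_wcat hPl (Aw t), P_wcat hPg (Bw s),
          P_wcat hPg (Bw t), hsgnA s, hsgnA t, hsgnB s, hsgnB t] at h
        convert h using 2
        ring
      -- injectivity of q
      have hqinj : Function.Injective q := by
        rintro ⟨s, i⟩ ⟨t, j⟩ hq
        have h1 : Aw s ++ (p i).1 = Aw t ++ (p j).1 := congrArg Prod.fst hq
        have h2 : Bw s ++ (p i).2 = Bw t ++ (p j).2 := congrArg Prod.snd hq
        obtain ⟨hA, hu⟩ := append_cancel_of_ratio hlam hLmax (hrAw s t) h1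
        obtain ⟨hB, hv⟩ := append_cancel_of_ratio hgam hGmax (hrBw s t) h2
        have hst : s = t := by
          rcases fin2 s with rfl | rfl <;> rcases fin2 t with rfl | rfl
          · rfl
          · exfalso
            rw [hAw0, hAw1] at hA
            rw [hBw0, hBw1] at hB
            exact hneA (by rw [hA, hB])
          · exfalso
            rw [hAw0, hAw1] at hA
            rw [hBw0, hBw1] at hB
            exact hneA (by rw [hA, hB])
          · rfl
        have hij : i = j := hinj (Prod.ext hu hv)
        rw [hst, hij]
      refine ⟨q ∘ e, hqinj.comp e.injective, ?_, ?_⟩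
      · -- squares
        intro m
        rcases h : e m with ⟨s, i⟩
        simp only [Function.comp_apply, h]
        show wprod lam (Aw s ++ (p i).1) / wprod gam (Bw s ++ (p i).2) ∈ _
        rw [wprod_append, wprod_append, mul_div_mul_comm]
        exact Ioo_exp_mul (hsqAw s) (hsq i) (by linarith)
      · -- closeness
        intro m m' hmm
        rcases h1 : e m with ⟨s, i⟩
        rcases h2 : e m' with ⟨t, j⟩
        simp only [Function.comp_apply, h1, h2]
        refine ⟨?_, ?_, ?_, ?_, ?_⟩
        · show wprod lam (Aw s ++ (p i).1) / wprod lam (Aw t ++ (p j).1) ∈ _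
          rw [wprod_append, wprod_append, mul_div_mul_comm]
          refine Ioo_exp_mul (hrAw s t) (hFr1 i j) ?_
          have : η ≤ ε/26 := le_trans hηΛ (by nlinarith)
          linarith
        · show wprod gam (Bw s ++ (p i).2) / wprod gam (Bw t ++ (p j).2) ∈ _
          rw [wprod_append, wprod_append, mul_div_mul_comm]
          refine Ioo_exp_mul (hrBw s t) (hFr2 i j) ?_
          have : η ≤ ε/26 := le_trans hηΛ (by nlinarith)
          linarith
        · show wprod Ol (Aw s ++ (p i).1) = wprod Ol (Aw t ++ (p j).1)
          rw [wprod_append, wprod_append, hsgnA s, hsgnA t, hFs1 i j]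
        · show wprod Og (Bw s ++ (p i).2) = wprod Og (Bw t ++ (p j).2)
          rw [wprod_append, wprod_append, hsgnB s, hsgnB t, hFs2 i j]
        · show |(Pl (wcat (Aw s ++ (p i).1) fun _ => 0)
              + Pg (wcat (Bw s ++ (p i).2) fun _ => 0))
            - (Pl (wcat (Aw t ++ (p j).1) fun _ => 0)
              + Pg (wcat (Bw t ++ (p j).2) fun _ => 0))| < _
          have key := cross_est D ε Λ η (wprod Ol a)
            (wprod lam (Aw s)) (wprod lam (Aw t))
            (wprod gam (Bw s)) (wprod gam (Bw t))
            (Kf Ol lam bl (Aw s)) (Kf Ol lam bl (Aw t))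
            (Kf Og gam bg (Bw s)) (Kf Og gam bg (Bw t))
            (Pl (wcat (p i).1 fun _ => 0)) (Pl (wcat (p j).1 fun _ => 0))
            (Pg (wcat (p i).2 fun _ => 0)) (Pg (wcat (p j).2 fun _ => 0))
            (Pl fun _ => 0) (Pg fun _ => 0)
            (wprod lam (p i).1) (wprod lam (p j).1)
            (wprod gam (p i).2) (wprod gam (p j).2)
            hD hε hΛpos hηpos hη13 hηΛ
            (abs_wprod_sign hOl a)
            (wprod_pos hlam _) (wprod_pos hlam _) (wprod_pos hgam _)
            (wprod_pos hgam _)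
            (hΛle1 i) (hΛle1 j) (hΛle2 i) (hΛle2 j)
            (hrAw s t) (hrBw s t) (hsqAw s) (hsqAw t)
            (hrl _) (hrg _) (hrl _) (hrl _) (hrg _) (hrg _)
            (h0st' s t) (hFL i j)
          rw [hLcat s (p i).1, hLcat t (p j).1, hGcat s (p i).2, hGcat t (p j).2,
            wprod_append, wprod_append, wprod_append, wprod_append]
          convert key using 2
          ring
  -- ===================== conclusion ==============================================
  intro ε hε δ hδ N
  obtain ⟨p, hinj, hsq, hcl⟩ := main N ε hε δ hδ
  have hle : N ≤ 2^N := (Nat.lt_two_pow_self (n := N)).le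
  refine ⟨fun i => p (Fin.castLE hle i), ?_, fun i => hsq _, fun i j hij =>
    hcl _ _ (fun hc => hij (Fin.castLE_injective hle hc))⟩
  intro i j h
  exact Fin.castLE_injective hle (hinj h)
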